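/- Let G be a connected non-bipartite graph that is edge-weight k-choosable. Then G is total weight (1,k)-choosable. (Given a (1,k)-list assignment, one can shift edge lists along an odd closed walk through each vertex to reduce all vertex lists to {0}, reducing the problem to edge-weight choosability.) -/

import Mathlib

open SimpleGraph Finset

section Aux

variable {V : Type} [Fintype V] [DecidableEq V] (G : SimpleGraph V) [DecidableRel G.Adj]

/-- Signed alternating indicator function of a walk. -/
def wfun : {a b : V} → G.Walk a b → ℝ → V → V → ℝ
  | _, _, .nil, _ => fun _ _ => 0
  | a, _, .cons (v := c) _ p, ε =>
      fun x y => (if (x = a ∧ y = c) ∨ (x = c ∧ y = a) then ε else 0) + wfun p (-ε) x y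

lemma wfun_symm : ∀ {a b : V} (p : G.Walk a b) (ε : ℝ) (x y : V),
    wfun G p ε x y = wfun G p ε y x := by
  intro a b p
  induction p with
  | nil => intro ε x y; simp [wfun]
  | @cons a' c' b' h p ih =>
      intro ε x y
      simp only [wfun, ih]
      have hiff : ((x = a' ∧ y = c') ∨ (x = c' ∧ y = a')) ↔
          ((y = a' ∧ x = c') ∨ (y = c' ∧ x = a')) := by tauto
      simp only [hiff]

lemma wfun_vsum : ∀ {a b : V} (p : G.Walk a b) (ε : ℝ) (u : V),
    ∑ x ∈ G.neighborFinset u, wfun G p ε u x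
      = ε * ((if u = a then 1 else 0) + (-1) ^ (p.length + 1) * (if u = b then 1 else 0)) := by
  intro a b p
  induction p with
  | nil =>
      intro ε u
      simp only [wfun, Finset.sum_const_zero, SimpleGraph.Walk.length_nil]
      split_ifs <;> norm_num
  | @cons a c b h p ih =>
      intro ε u
      have hac : a ≠ c := h.ne
      simp only [wfun, Finset.sum_add_distrib, ih, SimpleGraph.Walk.length_cons]
      have key : ∑ x ∈ G.neighborFinset u,
          (if (u = a ∧ x = c) ∨ (u = c ∧ x = a) then ε else 0)
          = ε * ((if u = a then 1 else 0) + (if u = c then 1 else 0)) := by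
        by_cases hua : u = a
        · subst hua
          have : ∀ x, (if (u = u ∧ x = c) ∨ (u = c ∧ x = u) then ε else 0)
              = if x = c then ε else 0 := by
            intro x
            by_cases hx : x = c <;> simp_all
          rw [Finset.sum_congr rfl fun x _ => this x, Finset.sum_ite_eq']
          simp [SimpleGraph.mem_neighborFinset, h, hac]
        · by_cases huc : u = c
          · subst huc
            have : ∀ x, (if (u = a ∧ x = u) ∨ (u = u ∧ x = a) then ε else 0)
                = if x = a then ε else 0 := by
              intro x
              by_cases hx : x = a <;> simp_all
            rw [Finset.sum_congr rfl fun x _ => this x, Finset.sum_ite_eq']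
            simp [SimpleGraph.mem_neighborFinset, h.symm, hua]
          · have : ∀ x, (if (u = a ∧ x = c) ∨ (u = c ∧ x = a) then ε else 0) = 0 := by
              intro x; simp [hua, huc]
            rw [Finset.sum_congr rfl fun x _ => this x]
            simp [hua, huc]
      rw [key, pow_succ ((-1 : ℝ)) (p.length + 1)]
      ring

lemma exists_odd_closed (hconn : G.Connected) (hnb : ¬ G.Colorable 2) (v : V) :
    ∃ p : G.Walk v v, Odd p.length := by
  classical
  have hmain : ∃ (v0 : V) (p : G.Walk v0 v0), Odd p.length := by
    by_contra hcon
    push_neg at hcon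
    obtain ⟨v0⟩ := hconn.nonempty
    apply hnb
    refine ⟨SimpleGraph.Coloring.mk
      (fun u => if ∃ p : G.Walk v0 u, Even p.length then (0 : Fin 2) else 1) ?_⟩
    intro u w hadj heq
    have hclosed : ∀ (p : G.Walk v0 u) (q : G.Walk v0 w),
        Even (p.length + (q.length + 1)) := by
      intro p q
      have := hcon v0 (p.append (SimpleGraph.Walk.cons hadj q.reverse))
      rw [Nat.odd_iff] at this
      simp only [SimpleGraph.Walk.length_append, SimpleGraph.Walk.length_cons,
        SimpleGraph.Walk.length_reverse] at this
      rw [Nat.even_iff]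
      omega
    by_cases hu : ∃ p : G.Walk v0 u, Even p.length
    · have hw : ∃ q : G.Walk v0 w, Even q.length := by
        by_contra hw
        simp [hu, hw] at heq
      obtain ⟨p, hp⟩ := hu
      obtain ⟨q, hq⟩ := hw
      have := hclosed p q
      rw [Nat.even_iff] at *
      omega
    · have hw : ¬ ∃ q : G.Walk v0 w, Even q.length := by
        by_contra hw
        simp [hu, hw] at heq
      push_neg at hu
      push_neg at hw
      obtain ⟨p⟩ := hconn.preconnected v0 u
      obtain ⟨q⟩ := hconn.preconnected v0 w
      have hp := hu p
      have hq := hw q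
      have := hclosed p q
      rw [Nat.even_iff] at *
      omega
  obtain ⟨v0, c0, hodd⟩ := hmain
  obtain ⟨p⟩ := hconn.preconnected v v0
  refine ⟨p.append (c0.append p.reverse), ?_⟩
  simp only [SimpleGraph.Walk.length_append, SimpleGraph.Walk.length_reverse]
  rw [Nat.odd_iff] at *
  omega

end Aux

/-- A connected non-bipartite graph that is edge-weight `k`-choosable is total weight
`(1,k)`-choosable. Edge weightings/lists are encoded as symmetric functions on ordered
pairs of adjacent vertices, and the weighted sum at `v` is `∑_{x ∈ N(v)} w v x`. -/
theorem stmt17 {V : Type} [Fintype V] [DecidableEq V] (G : SimpleGraph V)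
    [DecidableRel G.Adj]
    (hconn : G.Connected) (hnb : ¬ G.Colorable 2) (k : ℕ)
    (hew : ∀ L : V → V → Finset ℝ, (∀ u v, L u v = L v u) →
      (∀ u v, G.Adj u v → (L u v).card = k) →
      ∃ w : V → V → ℝ, (∀ u v, w u v = w v u) ∧ (∀ u v, G.Adj u v → w u v ∈ L u v) ∧
        ∀ u v, G.Adj u v →
          ∑ x ∈ G.neighborFinset u, w u x ≠ ∑ x ∈ G.neighborFinset v, w v x) :
    ∀ (fv : V → ℝ) (L : V → V → Finset ℝ), (∀ u v, L u v = L v u) →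
      (∀ u v, G.Adj u v → (L u v).card = k) →
      ∃ w : V → V → ℝ, (∀ u v, w u v = w v u) ∧ (∀ u v, G.Adj u v → w u v ∈ L u v) ∧
        ∀ u v, G.Adj u v →
          fv u + ∑ x ∈ G.neighborFinset u, w u x ≠
            fv v + ∑ x ∈ G.neighborFinset v, w v x := by
  intro fv L hLsymm hLcard
  classical
  choose c hc using exists_odd_closed G hconn hnb
  set d : V → V → ℝ := fun x y => ∑ v : V, wfun G (c v) (-(fv v) / 2) x y with hd
  have hdsymm : ∀ x y, d x y = d y x := by
    intro x y
    simp only [hd]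
    exact Finset.sum_congr rfl fun v _ => wfun_symm G (c v) _ x y
  have hdsum : ∀ u, ∑ x ∈ G.neighborFinset u, d u x = -(fv u) := by
    intro u
    simp only [hd]
    rw [Finset.sum_comm]
    have hterm : ∀ v : V, ∑ x ∈ G.neighborFinset u, wfun G (c v) (-(fv v) / 2) u x
        = if u = v then -(fv v) else 0 := by
      intro v
      rw [wfun_vsum]
      have heven : Even ((c v).length + 1) := by
        have := hc v
        rw [Nat.odd_iff] at this
        rw [Nat.even_iff]
        omega
      rw [heven.neg_one_pow]
      by_cases huv : u = v <;> simp [huv] <;> ring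
    rw [Finset.sum_congr rfl fun v _ => hterm v, Finset.sum_ite_eq]
    simp
  set L' : V → V → Finset ℝ := fun u v => (L u v).image (fun r => r - d u v) with hL'
  have hL'symm : ∀ u v, L' u v = L' v u := by
    intro u v
    simp only [hL', hLsymm u v, hdsymm u v]
  have hL'card : ∀ u v, G.Adj u v → (L' u v).card = k := by
    intro u v hadj
    rw [hL']
    rw [Finset.card_image_of_injective _ (sub_left_injective), hLcard u v hadj]
  obtain ⟨w', hw'symm, hw'mem, hw'ne⟩ := hew L' hL'symm hL'card
  refine ⟨fun u v => w' u v + d u v, ?_, ?_, ?_⟩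
  · intro u v
    show w' u v + d u v = w' v u + d v u
    rw [hw'symm u v, hdsymm u v]
  · intro u v hadj
    have := hw'mem u v hadj
    rw [hL'] at this
    obtain ⟨r, hr, hre⟩ := Finset.mem_image.mp this
    show w' u v + d u v ∈ L u v
    have heq : w' u v + d u v = r := by linarith [hre]
    rw [heq]
    exact hr
  · intro u v hadj heq
    apply hw'ne u v hadj
    simp only [] at heq
    rw [Finset.sum_add_distrib, Finset.sum_add_distrib, hdsum u, hdsum v] at heq
    linarith
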